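/- arXiv:math-ph/0612072 — 6 statements merged into one kernel-verified Lean document; each statement's English description precedes it below -/
import Mathlib

section
/- Let α(w) = (aw+b)/(cw+d) be a Möbius transformation of the complex plane with a,b,c,d ∈ ℂ and ad − bc ≠ 0. Let w_1, …, w_n ∈ ℂ be pairwise distinct points with cw_i + d ≠ 0 for every i, and let k_1, …, k_n be integers with ∑_{i=1}^n k_i = 0. Then ∏_{1 ≤ i < j ≤ n} |α(w_i) − α(w_j)|^{k_i k_j/(2π)} = (∏_{i=1}^n |α'(w_i)|^{−k_i²/(4π)}) · ∏_{1 ≤ i < j ≤ n} |w_i − w_j|^{k_i k_j/(2π)}, where α'(w) = (ad − bc)/(cw+d)² is the complex derivative of α. -/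
open Real Finset

private lemma pair_half {n : ℕ} (g : Fin n → Fin n → ℝ) (hg : ∀ i j, g i j = g j i) :
    2 * (∑ i, ∑ j ∈ Finset.univ.filter (fun j => i < j), g i j)
      = (∑ i, ∑ j, g i j) - ∑ i, g i i := by
  have h1 : ∑ i, ∑ j, g i j
      = (∑ i, ∑ j ∈ Finset.univ.filter (fun j => i < j), g i j)
        + ((∑ i, ∑ j ∈ Finset.univ.filter (fun j => j < i), g i j) + ∑ i, g i i) := by
    rw [← Finset.sum_add_distrib, ← Finset.sum_add_distrib]
    refine Finset.sum_congr rfl fun i _ => ?_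
    rw [← Finset.sum_filter_add_sum_filter_not Finset.univ (fun j => i < j) (g i)]
    congr 1
    have hins : Finset.univ.filter (fun j => ¬ i < j)
        = insert i (Finset.univ.filter (fun j => j < i)) := by
      ext j
      simp only [Finset.mem_filter, Finset.mem_univ, true_and, Finset.mem_insert,
        not_lt, Fin.lt_def, Fin.le_def, Fin.ext_iff]
      omega
    rw [hins, Finset.sum_insert (by simp)]
    ring
  have h2 : (∑ i, ∑ j ∈ Finset.univ.filter (fun j => j < i), g i j)
      = ∑ i, ∑ j ∈ Finset.univ.filter (fun j => i < j), g i j := by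
    rw [Finset.sum_comm' (t' := Finset.univ)
      (s' := fun j => Finset.univ.filter (fun i => j < i)) (by intro i j; simp)]
    exact Finset.sum_congr rfl fun i _ => Finset.sum_congr rfl fun j _ => hg j i
  linarith

/-- Möbius covariance of the flat massless free-boson correlation functions:
for a Möbius transformation `α(w) = (aw+b)/(cw+d)` and a charge-neutral configuration,
`∏_{i<j} |α(w_i) - α(w_j)|^{k_i k_j/(2π)}
  = ∏_i |α'(w_i)|^{-k_i²/(4π)} · ∏_{i<j} |w_i - w_j|^{k_i k_j/(2π)}`. -/
theorem mobius_covariance_flat_correlation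
    (n : ℕ) (a b c d : ℂ) (hdet : a * d - b * c ≠ 0)
    (w : Fin n → ℂ) (hw : Function.Injective w)
    (hcd : ∀ i, c * w i + d ≠ 0)
    (k : Fin n → ℤ) (hk : ∑ i, k i = 0) :
    (∏ i, ∏ j ∈ Finset.univ.filter (fun j => i < j),
        ‖(a * w i + b) / (c * w i + d) - (a * w j + b) / (c * w j + d)‖
          ^ ((k i : ℝ) * (k j : ℝ) / (2 * π)))
      = (∏ i, ‖(a * d - b * c) / (c * w i + d) ^ 2‖
            ^ (-(k i : ℝ) ^ 2 / (4 * π)))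
        * ∏ i, ∏ j ∈ Finset.univ.filter (fun j => i < j),
            ‖w i - w j‖ ^ ((k i : ℝ) * (k j : ℝ) / (2 * π)) := by
  have hne : ∀ i j : Fin n, i ≠ j → w i - w j ≠ 0 := fun i j h =>
    sub_ne_zero.2 fun e => h (hw e)
  have hdiff : ∀ i j : Fin n,
      (a * w i + b) / (c * w i + d) - (a * w j + b) / (c * w j + d)
        = (a * d - b * c) * (w i - w j) / ((c * w i + d) * (c * w j + d)) := by
    intro i j
    rw [div_sub_div _ _ (hcd i) (hcd j)]
    congr 1
    ring
  have hnum : ∀ i j : Fin n, i ≠ j →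
      (a * w i + b) / (c * w i + d) - (a * w j + b) / (c * w j + d) ≠ 0 := by
    intro i j hij
    rw [hdiff]
    exact div_ne_zero (mul_ne_zero hdet (hne i j hij)) (mul_ne_zero (hcd i) (hcd j))
  set D : ℝ := Real.log (‖a * d - b * c‖) with hD
  set C : Fin n → ℝ := fun i => Real.log (‖c * w i + d‖) with hCdef
  set L : Fin n → Fin n → ℝ := fun i j => Real.log (‖w i - w j‖) with hLdef
  have hlogdiff : ∀ i j : Fin n, i ≠ j →
      Real.log (‖(a * w i + b) / (c * w i + d) - (a * w j + b) / (c * w j + d)‖)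
        = D + L i j - C i - C j := by
    intro i j hij
    rw [hdiff, norm_div, norm_mul, norm_mul,
      Real.log_div (mul_ne_zero (norm_ne_zero_iff.mpr hdet) (norm_ne_zero_iff.mpr (hne i j hij)))
        (mul_ne_zero (norm_ne_zero_iff.mpr (hcd i)) (norm_ne_zero_iff.mpr (hcd j))),
      Real.log_mul (norm_ne_zero_iff.mpr hdet) (norm_ne_zero_iff.mpr (hne i j hij)),
      Real.log_mul (norm_ne_zero_iff.mpr (hcd i)) (norm_ne_zero_iff.mpr (hcd j))]
    simp only [hD, hCdef, hLdef]
    ring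
  -- positivity
  have hposL : (0:ℝ) < ∏ i, ∏ j ∈ Finset.univ.filter (fun j => i < j),
      ‖(a * w i + b) / (c * w i + d) - (a * w j + b) / (c * w j + d)‖
        ^ ((k i : ℝ) * (k j : ℝ) / (2 * π)) :=
    Finset.prod_pos fun i _ => Finset.prod_pos fun j hj =>
      Real.rpow_pos_of_pos (norm_pos_iff.mpr (hnum i j (Finset.mem_filter.1 hj).2.ne)) _
  have hposR1 : (0:ℝ) < ∏ i, ‖(a * d - b * c) / (c * w i + d) ^ 2‖
      ^ (-(k i : ℝ) ^ 2 / (4 * π)) :=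
    Finset.prod_pos fun i _ => Real.rpow_pos_of_pos
      (norm_pos_iff.mpr (div_ne_zero hdet (pow_ne_zero 2 (hcd i)))) _
  have hposR2 : (0:ℝ) < ∏ i, ∏ j ∈ Finset.univ.filter (fun j => i < j),
      ‖w i - w j‖ ^ ((k i : ℝ) * (k j : ℝ) / (2 * π)) :=
    Finset.prod_pos fun i _ => Finset.prod_pos fun j hj =>
      Real.rpow_pos_of_pos (norm_pos_iff.mpr (hne i j (Finset.mem_filter.1 hj).2.ne)) _
  rw [← Real.exp_log hposL, ← Real.exp_log (mul_pos hposR1 hposR2)]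
  congr 1
  -- compute logs
  have hlogL : Real.log (∏ i, ∏ j ∈ Finset.univ.filter (fun j => i < j),
      ‖(a * w i + b) / (c * w i + d) - (a * w j + b) / (c * w j + d)‖
        ^ ((k i : ℝ) * (k j : ℝ) / (2 * π)))
      = ∑ i, ∑ j ∈ Finset.univ.filter (fun j => i < j),
          ((k i : ℝ) * (k j : ℝ) / (2 * π)) * (D + L i j - C i - C j) := by
    rw [Real.log_prod (fun i _ => (Finset.prod_pos fun j hj =>
      Real.rpow_pos_of_pos (norm_pos_iff.mpr (hnum i j (Finset.mem_filter.1 hj).2.ne)) _).ne')]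
    refine Finset.sum_congr rfl fun i _ => ?_
    rw [Real.log_prod (fun j hj => (Real.rpow_pos_of_pos
      (norm_pos_iff.mpr (hnum i j (Finset.mem_filter.1 hj).2.ne)) _).ne')]
    refine Finset.sum_congr rfl fun j hj => ?_
    rw [Real.log_rpow (norm_pos_iff.mpr (hnum i j (Finset.mem_filter.1 hj).2.ne)),
      hlogdiff i j (Finset.mem_filter.1 hj).2.ne]
  have hlogR1 : Real.log (∏ i, ‖(a * d - b * c) / (c * w i + d) ^ 2‖
      ^ (-(k i : ℝ) ^ 2 / (4 * π)))
      = ∑ i, (-(k i : ℝ) ^ 2 / (4 * π)) * (D - 2 * C i) := by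
    rw [Real.log_prod (fun i _ => (Real.rpow_pos_of_pos
      (norm_pos_iff.mpr (div_ne_zero hdet (pow_ne_zero 2 (hcd i)))) _).ne')]
    refine Finset.sum_congr rfl fun i _ => ?_
    rw [Real.log_rpow (norm_pos_iff.mpr (div_ne_zero hdet (pow_ne_zero 2 (hcd i)))),
      norm_div, norm_pow,
      Real.log_div (norm_ne_zero_iff.mpr hdet) (pow_ne_zero 2 (norm_ne_zero_iff.mpr (hcd i))),
      Real.log_pow]
    simp only [hD, hCdef]
    ring
  have hlogR2 : Real.log (∏ i, ∏ j ∈ Finset.univ.filter (fun j => i < j),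
      ‖w i - w j‖ ^ ((k i : ℝ) * (k j : ℝ) / (2 * π)))
      = ∑ i, ∑ j ∈ Finset.univ.filter (fun j => i < j),
          ((k i : ℝ) * (k j : ℝ) / (2 * π)) * L i j := by
    rw [Real.log_prod (fun i _ => (Finset.prod_pos fun j hj =>
      Real.rpow_pos_of_pos (norm_pos_iff.mpr (hne i j (Finset.mem_filter.1 hj).2.ne)) _).ne')]
    refine Finset.sum_congr rfl fun i _ => ?_
    rw [Real.log_prod (fun j hj => (Real.rpow_pos_of_pos
      (norm_pos_iff.mpr (hne i j (Finset.mem_filter.1 hj).2.ne)) _).ne')]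
    exact Finset.sum_congr rfl fun j hj =>
      Real.log_rpow (norm_pos_iff.mpr (hne i j (Finset.mem_filter.1 hj).2.ne)) _
  rw [Real.log_mul hposR1.ne' hposR2.ne', hlogL, hlogR1, hlogR2]
  -- now a pure sum identity
  have hKsum : ∑ i, (k i : ℝ) = 0 := by
    have := congrArg (fun z : ℤ => (z : ℝ)) hk
    push_cast at this
    exact this
  set g : Fin n → Fin n → ℝ := fun i j => ((k i : ℝ) * (k j : ℝ) / (2 * π)) * (D - C i - C j)
    with hgdef
  have hgsymm : ∀ i j, g i j = g j i := by intro i j; simp only [hgdef]; ring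
  have hsplit : ∑ i, ∑ j ∈ Finset.univ.filter (fun j => i < j),
      ((k i : ℝ) * (k j : ℝ) / (2 * π)) * (D + L i j - C i - C j)
      = (∑ i, ∑ j ∈ Finset.univ.filter (fun j => i < j), g i j)
        + ∑ i, ∑ j ∈ Finset.univ.filter (fun j => i < j),
            ((k i : ℝ) * (k j : ℝ) / (2 * π)) * L i j := by
    rw [← Finset.sum_add_distrib]
    refine Finset.sum_congr rfl fun i _ => ?_
    rw [← Finset.sum_add_distrib]
    refine Finset.sum_congr rfl fun j _ => ?_
    simp only [hgdef]
    ring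
  rw [hsplit]
  have hfull : ∑ i, ∑ j, g i j = 0 := by
    have hinner : ∀ i, ∑ j, g i j = (k i : ℝ) * ((-(∑ j, (k j : ℝ) * C j)) / (2 * π)) := by
      intro i
      have hterm : ∀ j, g i j = ((k i : ℝ) * (D - C i) / (2 * π)) * (k j : ℝ)
          - ((k i : ℝ) / (2 * π)) * ((k j : ℝ) * C j) := by
        intro j; simp only [hgdef]; ring
      rw [Finset.sum_congr rfl fun j _ => hterm j, Finset.sum_sub_distrib,
        ← Finset.mul_sum, ← Finset.mul_sum, hKsum]
      ring
    rw [Finset.sum_congr rfl fun i _ => hinner i, ← Finset.sum_mul, hKsum, zero_mul]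
  have hdiag : ∑ i, g i i = ∑ i, ((k i : ℝ) ^ 2 / (2 * π)) * (D - 2 * C i) := by
    refine Finset.sum_congr rfl fun i _ => ?_
    simp only [hgdef]
    ring
  have hkey := pair_half g hgsymm
  rw [hfull, hdiag] at hkey
  have htarget : ∑ i, (-(k i : ℝ) ^ 2 / (4 * π)) * (D - 2 * C i)
      = (-(1:ℝ)/2) * ∑ i, ((k i : ℝ) ^ 2 / (2 * π)) * (D - 2 * C i) := by
    rw [Finset.mul_sum]
    refine Finset.sum_congr rfl fun i _ => ?_
    ring
  rw [htarget]
  linarith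
end

section
/- Call a configuration a finite list Z = ((k_1,z_1),…,(k_n,z_n)) with k_i ∈ ℤ and z_i ∈ ℂ pairwise distinct satisfying 0 < |z_i| < 1. For configurations Z = ((k_i,z_i))_{i=1}^n and Z' = ((k'_j,z'_j))_{j=1}^m define B(Z,Z') = 0 if ∑_i k_i ≠ ∑_j k'_j, and otherwise B(Z,Z') = (∏_{i=1}^n |z_i|^{−k_i²/(2π)}) · (∏_{1≤i<i'≤n} |1/conj(z_i) − 1/conj(z_{i'})|^{k_i k_{i'}/(2π)}) · (∏_{1≤j<j'≤m} |z'_j − z'_{j'}|^{k'_j k'_{j'}/(2π)}) · (∏_{i=1}^n ∏_{j=1}^m |1/conj(z_i) − z'_j|^{−k_i k'_j/(2π)}). Then for every finite family of configurations Z_1, …, Z_N and every choice of complex coefficients c_1, …, c_N, the number ∑_{a,b=1}^N conj(c_a) c_b B(Z_a, Z_b) is real and nonnegative. -/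
open Real Finset

/-- A configuration: a finite list of integer charges at pairwise distinct points
of the punctured open unit disc. -/
structure Config where
  n : ℕ
  k : Fin n → ℤ
  z : Fin n → ℂ
  hz : ∀ i, 0 < ‖z i‖ ∧ ‖z i‖ < 1
  hinj : Function.Injective z

/-- The flat-metric reflected correlation `B(Z,Z') = ⟨(Θ̃ Z) Z'⟩`. -/
noncomputable def reflCorr (Z Z' : Config) : ℝ :=
  if ∑ i, Z.k i ≠ ∑ j, Z'.k j then 0
  else
    (∏ i, ‖Z.z i‖ ^ (-(Z.k i : ℝ) ^ 2 / (2 * π)))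
    * (∏ i, ∏ i' ∈ Finset.univ.filter (fun i' => i < i'),
        ‖(starRingEnd ℂ (Z.z i))⁻¹ - (starRingEnd ℂ (Z.z i'))⁻¹‖
          ^ ((Z.k i : ℝ) * (Z.k i' : ℝ) / (2 * π)))
    * (∏ j, ∏ j' ∈ Finset.univ.filter (fun j' => j < j'),
        ‖Z'.z j - Z'.z j'‖
          ^ ((Z'.k j : ℝ) * (Z'.k j' : ℝ) / (2 * π)))
    * (∏ i, ∏ j,
        ‖(starRingEnd ℂ (Z.z i))⁻¹ - Z'.z j‖
          ^ (-((Z.k i : ℝ) * (Z'.k j : ℝ)) / (2 * π)))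

namespace RP

lemma prod_rpow_eq_exp {α : Type*} (s : Finset α) (b c : α → ℝ) (hb : ∀ i ∈ s, 0 < b i) :
    ∏ i ∈ s, b i ^ c i = Real.exp (∑ i ∈ s, c i * Real.log (b i)) := by
  rw [Real.exp_sum]
  exact Finset.prod_congr rfl fun i hi => by rw [Real.rpow_def_of_pos (hb i hi), mul_comm]

lemma pair_symm {n : ℕ} (F g : Fin n → ℝ) :
    ∑ i, ∑ i' ∈ Finset.univ.filter (fun i' => i < i'), (F i * g i' + F i' * g i)
    = ∑ i, F i * ((∑ i', g i') - g i) := by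
  have swap : ∑ i, ∑ i' ∈ Finset.univ.filter (fun i' => i < i'), F i' * g i
      = ∑ i, ∑ i' ∈ Finset.univ.filter (fun i' => i' < i), F i * g i' := by
    rw [Finset.sum_comm' (s := Finset.univ) (t := fun i => Finset.univ.filter (fun i' => i < i'))
      (t' := Finset.univ) (s' := fun i' => Finset.univ.filter (fun i => i < i'))
      (f := fun i i' => F i' * g i)]
    intro x y; simp [Finset.mem_filter]
  simp only [Finset.sum_add_distrib]
  rw [swap, ← Finset.sum_add_distrib]
  refine Finset.sum_congr rfl fun i _ => ?_
  rw [← Finset.sum_union (by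
    rw [Finset.disjoint_filter]
    intro x _ h1 h2
    exact lt_asymm h1 h2)]
  rw [← Finset.filter_or]
  have : Finset.univ.filter (fun i' => i < i' ∨ i' < i) = Finset.univ.filter (fun i' => i' ≠ i) := by
    apply Finset.filter_congr
    intro x _
    simp [lt_or_lt_iff_ne, ne_comm, eq_comm]
  rw [this, Finset.filter_ne', Finset.sum_erase_eq_sub (Finset.mem_univ i), mul_sub,
    Finset.mul_sum]

lemma abs1 (z w : ℂ) (hz : z ≠ 0) (hw : w ≠ 0) :
    ‖(starRingEnd ℂ z)⁻¹ - (starRingEnd ℂ w)⁻¹‖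
      = ‖z - w‖ / (‖z‖ * ‖w‖) := by
  have hz' : (starRingEnd ℂ) z ≠ 0 := by simpa
  have hw' : (starRingEnd ℂ) w ≠ 0 := by simpa
  have key : (starRingEnd ℂ z)⁻¹ - (starRingEnd ℂ w)⁻¹
      = (starRingEnd ℂ) (w - z) / ((starRingEnd ℂ) z * (starRingEnd ℂ) w) := by
    rw [map_sub]; field_simp
  rw [key, norm_div, norm_mul, Complex.norm_conj, Complex.norm_conj, Complex.norm_conj]
  congr 1
  rw [← neg_sub, norm_neg]

lemma abs2 (z w : ℂ) (hz : z ≠ 0) :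
    ‖(starRingEnd ℂ z)⁻¹ - w‖
      = ‖1 - (starRingEnd ℂ) z * w‖ / ‖z‖ := by
  have hz' : (starRingEnd ℂ) z ≠ 0 := by simpa
  have key : (starRingEnd ℂ z)⁻¹ - w = (1 - (starRingEnd ℂ) z * w) / (starRingEnd ℂ) z := by
    field_simp
  rw [key, norm_div, Complex.norm_conj]


/-- total charge -/
def Q (Z : Config) : ℤ := ∑ i, Z.k i

/-- log of the self-interaction factor -/
noncomputable def A (Z : Config) : ℝ :=
  ∑ i, ∑ i' ∈ Finset.univ.filter (fun i' => i < i'),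
    ((Z.k i : ℝ) * (Z.k i' : ℝ) / (2 * π)) * Real.log (‖Z.z i - Z.z i'‖)

/-- charge moments -/
noncomputable def S (Z : Config) (n : ℕ) : ℂ := ∑ i, (Z.k i : ℂ) * (Z.z i) ^ n

/-- terms of the cross-interaction series -/
noncomputable def gterm (Z Z' : Config) (n : ℕ) : ℝ :=
  (1 / (2 * π)) * (((starRingEnd ℂ) (S Z (n + 1)) * S Z' (n + 1)).re / (n + 1))

/-- the cross-interaction -/
noncomputable def G (Z Z' : Config) : ℝ := ∑' n, gterm Z Z' n

lemma abs_pos_z (Z : Config) (i : Fin Z.n) : 0 < ‖Z.z i‖ := (Z.hz i).1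

lemma abs_lt_one_z (Z : Config) (i : Fin Z.n) : ‖Z.z i‖ < 1 := (Z.hz i).2

lemma abs_u_lt_one (Z Z' : Config) (i : Fin Z.n) (j : Fin Z'.n) :
    ‖(starRingEnd ℂ) (Z.z i) * Z'.z j‖ < 1 := by
  rw [norm_mul, Complex.norm_conj]
  calc ‖Z.z i‖ * ‖Z'.z j‖
      ≤ ‖Z.z i‖ * 1 := by
        exact mul_le_mul_of_nonneg_left (le_of_lt (abs_lt_one_z Z' j)) (norm_nonneg _)
    _ = ‖Z.z i‖ := mul_one _
    _ < 1 := abs_lt_one_z Z i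

lemma one_sub_ne (u : ℂ) (hu : ‖u‖ < 1) : (1 : ℂ) - u ≠ 0 := by
  intro h
  have : (1 : ℂ) = u := by linear_combination h
  rw [← this] at hu; simp at hu

/-- `-log|1-u| = ∑_{n≥1} Re(u^n)/n` -/
lemma hasSum_neg_log (u : ℂ) (hu : ‖u‖ < 1) :
    HasSum (fun n : ℕ => (u ^ (n + 1)).re / (n + 1)) (-Real.log (‖1 - u‖)) := by
  have h := Complex.hasSum_taylorSeries_neg_log (z := u) (by simpa using hu)
  have h2 : HasSum (fun n : ℕ => (u ^ n / n).re) (-Real.log (‖1 - u‖)) := by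
    have := Complex.hasSum_re h
    simpa [Complex.log_re] using this
  have key : HasSum (fun n : ℕ => (u ^ (n + 1) / (n + 1 : ℕ)).re)
      (-Real.log (‖1 - u‖)) := by
    rw [hasSum_nat_add_iff (f := fun n : ℕ => (u ^ n / n).re) 1]
    simpa using h2
  convert key using 2 with n
  have : ((n + 1 : ℕ) : ℂ) = (((n + 1 : ℕ) : ℝ) : ℂ) := by push_cast; ring
  rw [this, Complex.div_ofReal_re]
  push_cast; ring

/-- conjugate-bilinear expansion of the moment pairing -/
lemma conj_S_mul (Z Z' : Config) (m : ℕ) :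
    (starRingEnd ℂ) (S Z m) * S Z' m
      = ∑ i, ∑ j, ((Z.k i : ℂ) * (Z'.k j : ℂ)) * ((starRingEnd ℂ) (Z.z i) * Z'.z j) ^ m := by
  rw [S, S, map_sum, Finset.sum_mul_sum]
  refine Finset.sum_congr rfl fun i _ => Finset.sum_congr rfl fun j _ => ?_
  rw [map_mul, map_pow, map_intCast]
  ring

lemma hasSum_G (Z Z' : Config) :
    HasSum (gterm Z Z')
      (∑ i, ∑ j, (-((Z.k i : ℝ) * (Z'.k j : ℝ)) / (2 * π)) *
        Real.log (‖1 - (starRingEnd ℂ) (Z.z i) * Z'.z j‖)) := by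
  have key : ∀ i : Fin Z.n, ∀ j : Fin Z'.n,
      HasSum (fun n : ℕ => ((Z.k i : ℝ) * (Z'.k j : ℝ) / (2 * π)) *
          ((((starRingEnd ℂ) (Z.z i) * Z'.z j) ^ (n + 1)).re / (n + 1)))
        ((-((Z.k i : ℝ) * (Z'.k j : ℝ)) / (2 * π)) *
          Real.log (‖1 - (starRingEnd ℂ) (Z.z i) * Z'.z j‖)) := by
    intro i j
    have := (hasSum_neg_log _ (abs_u_lt_one Z Z' i j)).mul_left
      ((Z.k i : ℝ) * (Z'.k j : ℝ) / (2 * π))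
    convert this using 1
    · rfl
    ring
  have h1 : HasSum (fun n : ℕ => ∑ i, ∑ j,
      ((Z.k i : ℝ) * (Z'.k j : ℝ) / (2 * π)) *
          ((((starRingEnd ℂ) (Z.z i) * Z'.z j) ^ (n + 1)).re / (n + 1)))
      (∑ i, ∑ j, (-((Z.k i : ℝ) * (Z'.k j : ℝ)) / (2 * π)) *
        Real.log (‖1 - (starRingEnd ℂ) (Z.z i) * Z'.z j‖)) :=
    hasSum_sum fun i _ => hasSum_sum fun j _ => key i j
  convert h1 using 2 with n
  rw [gterm, conj_S_mul, Complex.re_sum]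
  rw [Finset.sum_div, Finset.mul_sum]
  refine Finset.sum_congr rfl fun i _ => ?_
  rw [Complex.re_sum, Finset.sum_div, Finset.mul_sum]
  refine Finset.sum_congr rfl fun j _ => ?_
  have : (((Z.k i : ℂ) * (Z'.k j : ℂ)) * ((starRingEnd ℂ) (Z.z i) * Z'.z j) ^ (n + 1)).re
      = (Z.k i : ℝ) * (Z'.k j : ℝ) * (((starRingEnd ℂ) (Z.z i) * Z'.z j) ^ (n + 1)).re := by
    have : ((Z.k i : ℂ) * (Z'.k j : ℂ)) = (((Z.k i : ℝ) * (Z'.k j : ℝ) : ℝ) : ℂ) := by push_cast; ring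
    rw [this, Complex.re_ofReal_mul]
  rw [this]; ring

lemma G_eq (Z Z' : Config) :
    G Z Z' = ∑ i, ∑ j, (-((Z.k i : ℝ) * (Z'.k j : ℝ)) / (2 * π)) *
        Real.log (‖1 - (starRingEnd ℂ) (Z.z i) * Z'.z j‖) :=
  (hasSum_G Z Z').tsum_eq

lemma summable_G (Z Z' : Config) : Summable (gterm Z Z') := (hasSum_G Z Z').summable

/-- symmetry of the cross term -/
lemma gterm_symm (Z Z' : Config) (n : ℕ) : gterm Z Z' n = gterm Z' Z n := by
  unfold gterm
  congr 2
  simp [Complex.mul_re, Complex.conj_re, Complex.conj_im]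
  ring

lemma G_symm (Z Z' : Config) : G Z Z' = G Z' Z := by
  unfold G; exact tsum_congr (gterm_symm Z Z')

lemma hzne (Z : Config) (i : Fin Z.n) : Z.z i ≠ 0 := by
  have h1 := (Z.hz i).1
  contrapose! h1
  simp [h1]

/-- The main factorization identity. -/
lemma reflCorr_eq (Z Z' : Config) :
    reflCorr Z Z' = if Q Z = Q Z' then
      Real.exp (A Z) * Real.exp (A Z') * Real.exp (G Z Z') else 0 := by
  by_cases h : (∑ i, Z.k i) = ∑ j, Z'.k j
  · rw [reflCorr, if_neg (by simpa using h), if_pos (show Q Z = Q Z' from h)]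
    -- positivity of the bases
    have pos2 : ∀ i i' : Fin Z.n, i ≠ i' →
        0 < ‖(starRingEnd ℂ (Z.z i))⁻¹ - (starRingEnd ℂ (Z.z i'))⁻¹‖ := by
      intro i i' hne
      rw [abs1 _ _ (hzne Z i) (hzne Z i')]
      have hzz : Z.z i - Z.z i' ≠ 0 := sub_ne_zero.mpr (fun e => hne (Z.hinj e))
      exact div_pos (norm_pos_iff.mpr hzz) (mul_pos (Z.hz i).1 (Z.hz i').1)
    have pos3 : ∀ j j' : Fin Z'.n, j ≠ j' → 0 < ‖Z'.z j - Z'.z j'‖ := by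
      intro j j' hne
      exact norm_pos_iff.mpr (sub_ne_zero.mpr (fun e => hne (Z'.hinj e)))
    have pos1u : ∀ (i : Fin Z.n) (j : Fin Z'.n),
        0 < ‖1 - (starRingEnd ℂ) (Z.z i) * Z'.z j‖ := fun i j =>
      norm_pos_iff.mpr (one_sub_ne _ (abs_u_lt_one Z Z' i j))
    have pos4 : ∀ (i : Fin Z.n) (j : Fin Z'.n),
        0 < ‖(starRingEnd ℂ (Z.z i))⁻¹ - Z'.z j‖ := by
      intro i j
      rw [abs2 _ _ (hzne Z i)]
      exact div_pos (pos1u i j) (Z.hz i).1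
    -- convert the four products to exponentials
    rw [prod_rpow_eq_exp _ _ _ (fun i _ => (Z.hz i).1)]
    rw [show (∏ i, ∏ i' ∈ Finset.univ.filter (fun i' => i < i'),
        ‖(starRingEnd ℂ (Z.z i))⁻¹ - (starRingEnd ℂ (Z.z i'))⁻¹‖
          ^ ((Z.k i : ℝ) * (Z.k i' : ℝ) / (2 * π)))
      = Real.exp (∑ i, ∑ i' ∈ Finset.univ.filter (fun i' => i < i'),
          ((Z.k i : ℝ) * (Z.k i' : ℝ) / (2 * π)) *
            Real.log (‖(starRingEnd ℂ (Z.z i))⁻¹ - (starRingEnd ℂ (Z.z i'))⁻¹‖))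
      from by
        rw [Real.exp_sum]
        refine Finset.prod_congr rfl fun i _ => ?_
        exact prod_rpow_eq_exp _ _ _
          (fun i' hi' => pos2 i i' (ne_of_lt (Finset.mem_filter.mp hi').2))]
    rw [show (∏ j, ∏ j' ∈ Finset.univ.filter (fun j' => j < j'),
        ‖Z'.z j - Z'.z j'‖ ^ ((Z'.k j : ℝ) * (Z'.k j' : ℝ) / (2 * π)))
      = Real.exp (∑ j, ∑ j' ∈ Finset.univ.filter (fun j' => j < j'),
          ((Z'.k j : ℝ) * (Z'.k j' : ℝ) / (2 * π)) *
            Real.log (‖Z'.z j - Z'.z j'‖))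
      from by
        rw [Real.exp_sum]
        refine Finset.prod_congr rfl fun j _ => ?_
        exact prod_rpow_eq_exp _ _ _
          (fun j' hj' => pos3 j j' (ne_of_lt (Finset.mem_filter.mp hj').2))]
    rw [show (∏ i, ∏ j, ‖(starRingEnd ℂ (Z.z i))⁻¹ - Z'.z j‖
          ^ (-((Z.k i : ℝ) * (Z'.k j : ℝ)) / (2 * π)))
      = Real.exp (∑ i, ∑ j, (-((Z.k i : ℝ) * (Z'.k j : ℝ)) / (2 * π)) *
          Real.log (‖(starRingEnd ℂ (Z.z i))⁻¹ - Z'.z j‖))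
      from by
        rw [Real.exp_sum]
        refine Finset.prod_congr rfl fun i _ => ?_
        exact prod_rpow_eq_exp _ _ _ (fun j _ => pos4 i j)]
    rw [← Real.exp_add, ← Real.exp_add, ← Real.exp_add, ← Real.exp_add, ← Real.exp_add]
    congr 1
    -- now the sum identity
    have L2 : ∀ i i' : Fin Z.n, i ≠ i' →
        Real.log (‖(starRingEnd ℂ (Z.z i))⁻¹ - (starRingEnd ℂ (Z.z i'))⁻¹‖)
          = Real.log (‖Z.z i - Z.z i'‖)
            - (Real.log (‖Z.z i‖) + Real.log (‖Z.z i'‖)) := by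
      intro i i' hne
      have hzz : Z.z i - Z.z i' ≠ 0 := sub_ne_zero.mpr (fun e => hne (Z.hinj e))
      rw [abs1 _ _ (hzne Z i) (hzne Z i'),
        Real.log_div (ne_of_gt (norm_pos_iff.mpr hzz))
          (ne_of_gt (mul_pos (Z.hz i).1 (Z.hz i').1)),
        Real.log_mul (ne_of_gt (Z.hz i).1) (ne_of_gt (Z.hz i').1)]
    have L4 : ∀ (i : Fin Z.n) (j : Fin Z'.n),
        Real.log (‖(starRingEnd ℂ (Z.z i))⁻¹ - Z'.z j‖)
          = Real.log (‖1 - (starRingEnd ℂ) (Z.z i) * Z'.z j‖)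
            - Real.log (‖Z.z i‖) := by
      intro i j
      rw [abs2 _ _ (hzne Z i),
        Real.log_div (ne_of_gt (pos1u i j)) (ne_of_gt (Z.hz i).1)]
    have R2 : (∑ i, ∑ i' ∈ Finset.univ.filter (fun i' => i < i'),
        ((Z.k i : ℝ) * (Z.k i' : ℝ) / (2 * π)) *
          Real.log (‖(starRingEnd ℂ (Z.z i))⁻¹ - (starRingEnd ℂ (Z.z i'))⁻¹‖))
        = A Z - ∑ i, ∑ i' ∈ Finset.univ.filter (fun i' => i < i'),
            (((Z.k i : ℝ) * Real.log (‖Z.z i‖) / (2 * π)) * (Z.k i' : ℝ)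
              + ((Z.k i' : ℝ) * Real.log (‖Z.z i'‖) / (2 * π)) * (Z.k i : ℝ)) := by
      rw [A, ← Finset.sum_sub_distrib]
      refine Finset.sum_congr rfl fun i _ => ?_
      rw [← Finset.sum_sub_distrib]
      refine Finset.sum_congr rfl fun i' hi' => ?_
      rw [L2 i i' (ne_of_lt (Finset.mem_filter.mp hi').2)]
      ring
    have R4 : (∑ i, ∑ j, (-((Z.k i : ℝ) * (Z'.k j : ℝ)) / (2 * π)) *
          Real.log (‖(starRingEnd ℂ (Z.z i))⁻¹ - Z'.z j‖))
        = (∑ i, ∑ j, (-((Z.k i : ℝ) * (Z'.k j : ℝ)) / (2 * π)) *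
            Real.log (‖1 - (starRingEnd ℂ) (Z.z i) * Z'.z j‖))
          + ∑ i, ((Z.k i : ℝ) * Real.log (‖Z.z i‖) / (2 * π)) * (∑ j, (Z'.k j : ℝ)) := by
      rw [← Finset.sum_add_distrib]
      refine Finset.sum_congr rfl fun i _ => ?_
      rw [Finset.mul_sum, ← Finset.sum_add_distrib]
      refine Finset.sum_congr rfl fun j _ => ?_
      rw [L4 i j]
      ring
    rw [R2, R4, pair_symm (fun i => (Z.k i : ℝ) * Real.log (‖Z.z i‖) / (2 * π))
      (fun i => (Z.k i : ℝ)), G_eq]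
    have hQ : (∑ i, (Z.k i : ℝ)) = ∑ j, (Z'.k j : ℝ) := by
      have := congrArg (fun q : ℤ => (q : ℝ)) h
      push_cast at this
      exact this
    have key : (∑ i, (-(Z.k i : ℝ) ^ 2 / (2 * π)) * Real.log (‖Z.z i‖))
        - (∑ i, ((Z.k i : ℝ) * Real.log (‖Z.z i‖) / (2 * π)) *
            ((∑ i', (Z.k i' : ℝ)) - (Z.k i : ℝ)))
        + (∑ i, ((Z.k i : ℝ) * Real.log (‖Z.z i‖) / (2 * π)) *
            (∑ j, (Z'.k j : ℝ))) = 0 := by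
      rw [← Finset.sum_sub_distrib, ← Finset.sum_add_distrib]
      apply Finset.sum_eq_zero
      intro i _
      rw [← hQ]
      ring
    have hA' : (∑ j, ∑ j' ∈ Finset.univ.filter (fun j' => j < j'),
        ((Z'.k j : ℝ) * (Z'.k j' : ℝ) / (2 * π)) *
          Real.log (‖Z'.z j - Z'.z j'‖)) = A Z' := rfl
    rw [hA']
    linarith [key]
  · rw [reflCorr, if_pos (by simpa using h), if_neg (show ¬ Q Z = Q Z' from h)]

/-! ### Gram matrices -/

/-- A Gram matrix: `M a b = ∑ s, f s a * f s b`. -/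
def IsGram {N : ℕ} (M : Fin N → Fin N → ℝ) : Prop :=
  ∃ (S : Type) (_ : Fintype S) (f : S → Fin N → ℝ), ∀ a b, M a b = ∑ s, f s a * f s b

lemma IsGram.congr {N : ℕ} {M M' : Fin N → Fin N → ℝ} (h : IsGram M)
    (he : ∀ a b, M a b = M' a b) : IsGram M' := by
  obtain ⟨S, hS, f, hf⟩ := h
  exact ⟨S, hS, f, fun a b => (he a b) ▸ hf a b⟩

lemma IsGram.psd {N : ℕ} {M : Fin N → Fin N → ℝ} (h : IsGram M) (x : Fin N → ℝ) :
    0 ≤ ∑ a, ∑ b, x a * x b * M a b := by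
  obtain ⟨S, hS, f, hf⟩ := h
  have key : ∑ s, (∑ a, x a * f s a) ^ 2 = ∑ a, ∑ b, x a * x b * M a b :=
    calc ∑ s, (∑ a, x a * f s a) ^ 2
        = ∑ s, ∑ a, ∑ b, (x a * f s a) * (x b * f s b) := by
          refine Finset.sum_congr rfl fun s _ => ?_
          rw [sq, Finset.sum_mul_sum]
      _ = ∑ a, ∑ s, ∑ b, (x a * f s a) * (x b * f s b) := Finset.sum_comm
      _ = ∑ a, ∑ b, x a * x b * M a b := by
          refine Finset.sum_congr rfl fun a _ => ?_
          rw [Finset.sum_comm]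
          refine Finset.sum_congr rfl fun b _ => ?_
          rw [hf, Finset.mul_sum]
          exact Finset.sum_congr rfl fun s _ => by ring
  rw [← key]
  exact Finset.sum_nonneg fun s _ => sq_nonneg _

lemma isGram_rankOne {N : ℕ} (v : Fin N → ℝ) : IsGram (fun a b => v a * v b) :=
  ⟨Unit, inferInstance, fun _ => v, fun a b => by simp⟩

lemma isGram_zero {N : ℕ} : IsGram (fun _ _ : Fin N => (0 : ℝ)) :=
  ⟨Empty, inferInstance, fun s => s.elim, fun a b => by simp⟩

lemma IsGram.add {N : ℕ} {M1 M2 : Fin N → Fin N → ℝ} (h1 : IsGram M1) (h2 : IsGram M2) :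
    IsGram (fun a b => M1 a b + M2 a b) := by
  obtain ⟨S, hS, f, hf⟩ := h1
  obtain ⟨T, hT, g, hg⟩ := h2
  exact ⟨S ⊕ T, inferInstance, Sum.elim f g, fun a b => by
    dsimp only
    rw [Fintype.sum_sum_type, hf, hg]; simp⟩

lemma IsGram.mul {N : ℕ} {M1 M2 : Fin N → Fin N → ℝ} (h1 : IsGram M1) (h2 : IsGram M2) :
    IsGram (fun a b => M1 a b * M2 a b) := by
  obtain ⟨S, hS, f, hf⟩ := h1
  obtain ⟨T, hT, g, hg⟩ := h2
  refine ⟨S × T, inferInstance, fun p a => f p.1 a * g p.2 a, fun a b => ?_⟩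
  dsimp only
  rw [hf, hg, Finset.sum_mul_sum, Fintype.sum_prod_type]
  exact Finset.sum_congr rfl fun s _ => Finset.sum_congr rfl fun t _ => by ring

lemma IsGram.smul {N : ℕ} {M : Fin N → Fin N → ℝ} (c : ℝ) (hc : 0 ≤ c) (h : IsGram M) :
    IsGram (fun a b => c * M a b) := by
  obtain ⟨S, hS, f, hf⟩ := h
  refine ⟨S, hS, fun s a => Real.sqrt c * f s a, fun a b => ?_⟩
  dsimp only
  rw [hf, Finset.mul_sum]
  refine Finset.sum_congr rfl fun s _ => ?_
  have : Real.sqrt c * Real.sqrt c = c := Real.mul_self_sqrt hc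
  calc c * (f s a * f s b) = (Real.sqrt c * Real.sqrt c) * (f s a * f s b) := by rw [this]
    _ = Real.sqrt c * f s a * (Real.sqrt c * f s b) := by ring

lemma IsGram.pow {N : ℕ} {M : Fin N → Fin N → ℝ} (h : IsGram M) (t : ℕ) :
    IsGram (fun a b => M a b ^ t) := by
  induction t with
  | zero => exact (isGram_rankOne (fun _ => 1)).congr (fun a b => by simp)
  | succ t ih => exact (ih.mul h).congr (fun a b => by rw [← pow_succ])

lemma isGram_sum_range {N : ℕ} (H : ℕ → Fin N → Fin N → ℝ) (hH : ∀ t, IsGram (H t)) (m : ℕ) :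
    IsGram (fun a b => ∑ t ∈ Finset.range m, H t a b) := by
  induction m with
  | zero => exact isGram_zero.congr (fun a b => by simp)
  | succ m ih => exact (ih.add (hH m)).congr (fun a b => by rw [Finset.sum_range_succ])

lemma isGram_delta {N : ℕ} (q : Fin N → ℤ) :
    IsGram (fun a b => if q a = q b then (1 : ℝ) else 0) := by
  classical
  refine ⟨{x // x ∈ Finset.image q Finset.univ}, inferInstance,
    fun s a => if q a = s.1 then 1 else 0, fun a b => ?_⟩
  dsimp only
  rw [Finset.sum_coe_sort (Finset.image q Finset.univ)
    (fun y => (if q a = y then (1:ℝ) else 0) * (if q b = y then 1 else 0))]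
  by_cases hab : q a = q b
  · rw [if_pos hab]
    have : ∀ y ∈ Finset.image q Finset.univ,
        (if q a = y then (1:ℝ) else 0) * (if q b = y then 1 else 0)
          = if q a = y then 1 else 0 := by
      intro y _
      by_cases h1 : q a = y
      · rw [if_pos h1, if_pos (hab ▸ h1), one_mul]
      · rw [if_neg h1, zero_mul]
    rw [Finset.sum_congr rfl this, Finset.sum_ite_eq]
    rw [if_pos (Finset.mem_image_of_mem q (Finset.mem_univ a))]
  · rw [if_neg hab]
    refine (Finset.sum_eq_zero fun y _ => ?_).symm
    by_cases h1 : q a = y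
    · rw [if_neg (show ¬ q b = y from fun h2 => hab (h1.trans h2.symm)), mul_zero]
    · rw [if_neg h1, zero_mul]

lemma isGram_gterm {N : ℕ} (Z : Fin N → Config) (n : ℕ) :
    IsGram (fun a b => gterm (Z a) (Z b) n) := by
  have hc : (0:ℝ) ≤ 1 / (2 * π * (n + 1)) := by positivity
  have g1 := (isGram_rankOne (fun a => (S (Z a) (n + 1)).re)).add
    (isGram_rankOne (fun a => (S (Z a) (n + 1)).im))
  refine (g1.smul _ hc).congr (fun a b => ?_)
  rw [gterm]
  simp only [Complex.mul_re, Complex.conj_re, Complex.conj_im]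
  have hπ : π ≠ 0 := ne_of_gt Real.pi_pos
  have hn : ((n:ℝ) + 1) ≠ 0 := by positivity
  field_simp
  ring

/-! ### The limit argument -/

/-- the target matrix -/
noncomputable def Mmat {N : ℕ} (Z : Fin N → Config) (a b : Fin N) : ℝ :=
  (if Q (Z a) = Q (Z b) then (1:ℝ) else 0)
    * (Real.exp (A (Z a)) * Real.exp (A (Z b))) * Real.exp (G (Z a) (Z b))

lemma Mmat_symm {N : ℕ} (Z : Fin N → Config) (a b : Fin N) : Mmat Z a b = Mmat Z b a := by
  rw [Mmat, Mmat, G_symm]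
  by_cases h : Q (Z a) = Q (Z b)
  · rw [if_pos h, if_pos h.symm]; ring
  · rw [if_neg h, if_neg (fun e => h e.symm)]
    ring

open Filter Topology in
lemma Mmat_psd {N : ℕ} (Z : Fin N → Config) (x : Fin N → ℝ) :
    0 ≤ ∑ a, ∑ b, x a * x b * Mmat Z a b := by
  set D : Fin N → Fin N → ℝ := fun a b => if Q (Z a) = Q (Z b) then 1 else 0 with hD
  set R : Fin N → Fin N → ℝ := fun a b => Real.exp (A (Z a)) * Real.exp (A (Z b)) with hR
  have gramT : ∀ K m : ℕ, IsGram (fun a b => D a b * R a b *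
      ∑ t ∈ Finset.range m, (∑ n ∈ Finset.range K, gterm (Z a) (Z b) n) ^ t / (t.factorial : ℝ)) := by
    intro K m
    have hG : IsGram (fun a b => ∑ n ∈ Finset.range K, gterm (Z a) (Z b) n) :=
      isGram_sum_range _ (fun n => isGram_gterm Z n) K
    have hsum : IsGram (fun a b => ∑ t ∈ Finset.range m,
        (∑ n ∈ Finset.range K, gterm (Z a) (Z b) n) ^ t / (t.factorial : ℝ)) := by
      refine isGram_sum_range (fun t a b =>
        (∑ n ∈ Finset.range K, gterm (Z a) (Z b) n) ^ t / (t.factorial : ℝ)) (fun t => ?_) m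
      have : (0:ℝ) ≤ 1 / (t.factorial : ℝ) := by positivity
      exact ((hG.pow t).smul _ this).congr (fun a b => by ring)
    exact ((isGram_delta (fun a => Q (Z a))).mul (isGram_rankOne
      (fun a => Real.exp (A (Z a))))).mul hsum
  have step1 : ∀ K : ℕ, 0 ≤ ∑ a, ∑ b, x a * x b *
      (D a b * R a b * Real.exp (∑ n ∈ Finset.range K, gterm (Z a) (Z b) n)) := by
    intro K
    have hlim : Tendsto (fun m => ∑ a, ∑ b, x a * x b * (D a b * R a b *
        ∑ t ∈ Finset.range m, (∑ n ∈ Finset.range K, gterm (Z a) (Z b) n) ^ t / (t.factorial : ℝ)))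
        atTop (𝓝 (∑ a, ∑ b, x a * x b *
          (D a b * R a b * Real.exp (∑ n ∈ Finset.range K, gterm (Z a) (Z b) n)))) := by
      apply tendsto_finset_sum
      intro a _
      apply tendsto_finset_sum
      intro b _
      apply Tendsto.const_mul
      apply Tendsto.const_mul
      have : HasSum (fun t => (∑ n ∈ Finset.range K, gterm (Z a) (Z b) n) ^ t / (t.factorial : ℝ))
          (Real.exp (∑ n ∈ Finset.range K, gterm (Z a) (Z b) n)) := by
        rw [Real.exp_eq_exp_ℝ]
        exact NormedSpace.expSeries_div_hasSum_exp _
      exact this.tendsto_sum_nat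
    exact ge_of_tendsto' hlim (fun m => (gramT K m).psd x)
  have step2 : Tendsto (fun K => ∑ a, ∑ b, x a * x b *
      (D a b * R a b * Real.exp (∑ n ∈ Finset.range K, gterm (Z a) (Z b) n)))
      atTop (𝓝 (∑ a, ∑ b, x a * x b * Mmat Z a b)) := by
    apply tendsto_finset_sum
    intro a _
    apply tendsto_finset_sum
    intro b _
    apply Tendsto.const_mul
    have hM : Mmat Z a b = D a b * R a b * Real.exp (G (Z a) (Z b)) := by rw [Mmat]
    rw [hM]
    apply Tendsto.const_mul
    have h1 : Tendsto (fun K => ∑ n ∈ Finset.range K, gterm (Z a) (Z b) n) atTop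
        (𝓝 (G (Z a) (Z b))) := (summable_G (Z a) (Z b)).hasSum.tendsto_sum_nat
    exact (Real.continuous_exp.continuousAt.tendsto).comp h1
  exact ge_of_tendsto' step2 step1

end RP

/-- Reflection positivity of the flat expectation: for any finite family of configurations
`Z_1, …, Z_N` and coefficients `c_1, …, c_N`, the number `∑_{a,b} conj(c_a) c_b B(Z_a, Z_b)`
is real and nonnegative. -/
theorem reflection_positivity_flat
    (N : ℕ) (Z : Fin N → Config) (c : Fin N → ℂ) :
    (∑ a, ∑ b, starRingEnd ℂ (c a) * c b * (reflCorr (Z a) (Z b) : ℂ)).im = 0 ∧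
    0 ≤ (∑ a, ∑ b, starRingEnd ℂ (c a) * c b * (reflCorr (Z a) (Z b) : ℂ)).re := by
  classical
  have hM : ∀ a b, reflCorr (Z a) (Z b) = RP.Mmat Z a b := by
    intro a b
    rw [RP.reflCorr_eq, RP.Mmat]
    by_cases h : RP.Q (Z a) = RP.Q (Z b)
    · rw [if_pos h, if_pos h]; ring
    · rw [if_neg h, if_neg h]; ring
  set x : Fin N → ℝ := fun a => (c a).re with hx
  set y : Fin N → ℝ := fun a => (c a).im with hy
  have hterm_re : ∀ a b : Fin N,
      (starRingEnd ℂ (c a) * c b * (reflCorr (Z a) (Z b) : ℂ)).re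
        = x a * x b * RP.Mmat Z a b + y a * y b * RP.Mmat Z a b := by
    intro a b
    rw [hM a b]
    simp only [Complex.mul_re, Complex.mul_im, Complex.conj_re, Complex.conj_im,
      Complex.ofReal_re, Complex.ofReal_im, hx, hy]
    ring
  have hterm_im : ∀ a b : Fin N,
      (starRingEnd ℂ (c a) * c b * (reflCorr (Z a) (Z b) : ℂ)).im
        = (x a * y b - y a * x b) * RP.Mmat Z a b := by
    intro a b
    rw [hM a b]
    simp only [Complex.mul_re, Complex.mul_im, Complex.conj_re, Complex.conj_im,
      Complex.ofReal_re, Complex.ofReal_im, hx, hy]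
    ring
  constructor
  · have him : (∑ a, ∑ b, starRingEnd ℂ (c a) * c b * (reflCorr (Z a) (Z b) : ℂ)).im
        = ∑ a, ∑ b, (x a * y b - y a * x b) * RP.Mmat Z a b := by
      rw [Complex.im_sum]
      refine Finset.sum_congr rfl fun a _ => ?_
      rw [Complex.im_sum]
      exact Finset.sum_congr rfl fun b _ => hterm_im a b
    rw [him]
    have hswap : ∑ a, ∑ b, (x a * y b - y a * x b) * RP.Mmat Z a b
        = ∑ a, ∑ b, (x b * y a - y b * x a) * RP.Mmat Z b a := Finset.sum_comm
    have hneg : ∀ a b : Fin N, (x b * y a - y b * x a) * RP.Mmat Z b a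
        = -((x a * y b - y a * x b) * RP.Mmat Z a b) := by
      intro a b
      rw [RP.Mmat_symm]
      ring
    have heq : ∑ a, ∑ b, (x a * y b - y a * x b) * RP.Mmat Z a b
        = -∑ a, ∑ b, (x a * y b - y a * x b) * RP.Mmat Z a b := by
      nth_rewrite 1 [hswap]
      rw [← Finset.sum_neg_distrib]
      refine Finset.sum_congr rfl fun a _ => ?_
      rw [← Finset.sum_neg_distrib]
      exact Finset.sum_congr rfl fun b _ => hneg a b
    linarith
  · have hre : (∑ a, ∑ b, starRingEnd ℂ (c a) * c b * (reflCorr (Z a) (Z b) : ℂ)).re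
        = (∑ a, ∑ b, x a * x b * RP.Mmat Z a b) + ∑ a, ∑ b, y a * y b * RP.Mmat Z a b := by
      rw [Complex.re_sum, ← Finset.sum_add_distrib]
      refine Finset.sum_congr rfl fun a _ => ?_
      rw [Complex.re_sum, ← Finset.sum_add_distrib]
      exact Finset.sum_congr rfl fun b _ => hterm_re a b
    rw [hre]
    exact add_nonneg (RP.Mmat_psd Z x) (RP.Mmat_psd Z y)
end

section
/- Let E be a real inner product space, let F and G be linear subspaces of E, and let β ≥ 1 be a real number. Suppose that for all f ∈ F and h ∈ G one has ‖f + h‖ ≤ β‖f − h‖. Then for all f ∈ F and h ∈ G, |⟨f, h⟩| ≤ ((β² − 1)/(β² + 1)) · ‖f‖ · ‖h‖. -/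
private lemma key_ineq
    (E : Type*) [NormedAddCommGroup E] [InnerProductSpace ℝ E]
    (F G : Submodule ℝ E) (β : ℝ)
    (hyp : ∀ f ∈ F, ∀ h ∈ G, ‖f + h‖ ≤ β * ‖f - h‖) :
    ∀ f ∈ F, ∀ h ∈ G,
      (inner ℝ f h : ℝ) * (2 * (β ^ 2 + 1)) ≤ (β ^ 2 - 1) * (‖f‖ ^ 2 + ‖h‖ ^ 2) := by
  intro f hf h hh
  have h1 := hyp f hf h hh
  have h2 : ‖f + h‖ ^ 2 ≤ β ^ 2 * ‖f - h‖ ^ 2 := by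
    have := mul_self_le_mul_self (norm_nonneg _) h1
    nlinarith [norm_nonneg (f - h), norm_nonneg (f + h)]
  have e1 : ‖f + h‖ ^ 2 = ‖f‖ ^ 2 + 2 * (inner ℝ f h : ℝ) + ‖h‖ ^ 2 := by
    rw [← real_inner_self_eq_norm_sq, ← real_inner_self_eq_norm_sq,
      ← real_inner_self_eq_norm_sq, inner_add_add_self, real_inner_comm h f]
    ring
  have e2 : ‖f - h‖ ^ 2 = ‖f‖ ^ 2 - 2 * (inner ℝ f h : ℝ) + ‖h‖ ^ 2 := by
    rw [← real_inner_self_eq_norm_sq, ← real_inner_self_eq_norm_sq,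
      ← real_inner_self_eq_norm_sq, inner_sub_sub_self, real_inner_comm h f]
    ring
  nlinarith

/-- Abstract almost-orthogonality estimate: if `F`, `G` are subspaces of a real inner
product space with `‖f + h‖ ≤ β ‖f - h‖` for all `f ∈ F`, `h ∈ G` (with `β ≥ 1`), then
`|⟨f, h⟩| ≤ ((β² - 1)/(β² + 1)) ‖f‖ ‖h‖`. -/
theorem almost_orthogonal_subspaces
    (E : Type*) [NormedAddCommGroup E] [InnerProductSpace ℝ E]
    (F G : Submodule ℝ E) (β : ℝ) (hβ : 1 ≤ β)
    (hyp : ∀ f ∈ F, ∀ h ∈ G, ‖f + h‖ ≤ β * ‖f - h‖) :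
    ∀ f ∈ F, ∀ h ∈ G,
      |(inner ℝ f h : ℝ)| ≤ ((β ^ 2 - 1) / (β ^ 2 + 1)) * ‖f‖ * ‖h‖ := by
  intro f hf h hh
  have hβ2 : (0:ℝ) < β ^ 2 + 1 := by nlinarith
  have hβ3 : (0:ℝ) ≤ β ^ 2 - 1 := by nlinarith
  rcases eq_or_ne (‖f‖ * ‖h‖) 0 with hz | hz
  · have hcs : |(inner ℝ f h : ℝ)| ≤ ‖f‖ * ‖h‖ := abs_real_inner_le_norm f h
    rw [hz] at hcs
    have hi : (inner ℝ f h : ℝ) = 0 :=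
      abs_eq_zero.mp (le_antisymm hcs (abs_nonneg _))
    rw [hi, abs_zero, mul_assoc, hz, mul_zero]
  · obtain ⟨hf0, hh0⟩ := mul_ne_zero_iff.mp hz
    have hfpos : 0 < ‖f‖ := lt_of_le_of_ne (norm_nonneg f) (Ne.symm hf0)
    have hhpos : 0 < ‖h‖ := lt_of_le_of_ne (norm_nonneg h) (Ne.symm hh0)
    have k1 := key_ineq E F G β hyp (‖h‖ • f) (F.smul_mem _ hf)
      (‖f‖ • h) (G.smul_mem _ hh)
    have k2 := key_ineq E F G β hyp (‖h‖ • f) (F.smul_mem _ hf)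
      (‖f‖ • (-h)) (G.smul_mem _ (G.neg_mem hh))
    rw [real_inner_smul_left, real_inner_smul_right] at k1 k2
    rw [inner_neg_right] at k2

    simp only [norm_smul, norm_norm, norm_neg, Real.norm_eq_abs, abs_norm] at k1 k2
    have hk1 : (inner ℝ f h : ℝ) * (β ^ 2 + 1) ≤ (β ^ 2 - 1) * (‖f‖ * ‖h‖) := by
      have hpos : 0 < ‖f‖ * ‖h‖ := mul_pos hfpos hhpos
      nlinarith
    have hk2 : -(inner ℝ f h : ℝ) * (β ^ 2 + 1) ≤ (β ^ 2 - 1) * (‖f‖ * ‖h‖) := by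
      have hpos : 0 < ‖f‖ * ‖h‖ := mul_pos hfpos hhpos
      nlinarith
    rw [abs_le]
    constructor
    · rw [neg_le, div_mul_eq_mul_div, div_mul_eq_mul_div, le_div_iff₀ hβ2]
      nlinarith
    · rw [div_mul_eq_mul_div, div_mul_eq_mul_div, le_div_iff₀ hβ2]
      nlinarith
end

section
/- Let f : ℝ² → ℝ be continuously differentiable with compact support, and let g : ℝ² → ℝ be continuously differentiable with |g(x)| ≤ 1 for all x and ‖∇g(x)‖ ≤ c for all x, for some constant c ≥ 0. Let α > 0 and μ > 0 satisfy (1 + α) c² ≤ μ/α. Then ∫_{ℝ²} ‖∇(g·f)(x)‖² dx + μ ∫_{ℝ²} (g(x) f(x))² dx ≤ (1 + α^{−1}) · ( ∫_{ℝ²} ‖∇f(x)‖² dx + μ ∫_{ℝ²} f(x)² dx ). -/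
open Real MeasureTheory InnerProductSpace

section aux

variable {F : Type*} [NormedAddCommGroup F] [InnerProductSpace ℝ F] [CompleteSpace F]

lemma gradient_mul' {g f : F → ℝ} (hg : DifferentiableAt ℝ g x) (hf : DifferentiableAt ℝ f x) :
    gradient (fun y => g y * f y) x = g x • gradient f x + f x • gradient g x := by
  unfold gradient
  rw [fderiv_fun_mul hg hf, map_add]
  simp [LinearIsometryEquiv.map_smul]

lemma continuous_gradient {f : F → ℝ} (hf : ContDiff ℝ 1 f) : Continuous (gradient f) := by
  have : Continuous (fderiv ℝ f) := hf.continuous_fderiv one_ne_zero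
  exact (toDual ℝ F).symm.continuous.comp this

lemma compactSupport_gradient {f : F → ℝ} (hf : HasCompactSupport f) :
    HasCompactSupport (gradient f) := by
  have := hf.fderiv (𝕜 := ℝ)
  exact this.comp_left (g := (toDual ℝ F).symm) (map_zero _)

end aux

/-- Quantitative Sobolev estimate for multiplication by a slowly varying bounded function:
if `|g| ≤ 1`, `‖∇g‖ ≤ c` and `(1+α) c² ≤ μ/α`, then
`‖∇(gf)‖² + μ ‖gf‖² ≤ (1 + α⁻¹) (‖∇f‖² + μ ‖f‖²)` in `L²(ℝ²)`. -/
theorem sobolev_multiplication_bound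
    (f g : EuclideanSpace ℝ (Fin 2) → ℝ)
    (hf : ContDiff ℝ 1 f) (hfc : HasCompactSupport f)
    (hg : ContDiff ℝ 1 g) (c : ℝ) (hc : 0 ≤ c)
    (hgb : ∀ x, |g x| ≤ 1) (hgd : ∀ x, ‖gradient g x‖ ≤ c)
    (α μ : ℝ) (hα : 0 < α) (hμ : 0 < μ)
    (hcond : (1 + α) * c ^ 2 ≤ μ / α) :
    (∫ x, ‖gradient (fun y => g y * f y) x‖ ^ 2) + μ * ∫ x, (g x * f x) ^ 2
      ≤ (1 + α⁻¹) * ((∫ x, ‖gradient f x‖ ^ 2) + μ * ∫ x, f x ^ 2) := by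
  have hgf : ContDiff ℝ 1 (fun y => g y * f y) := hg.mul hf
  have hgfc : HasCompactSupport (fun y => g y * f y) := by
    apply HasCompactSupport.mul_left hfc
  -- pointwise bound
  have key : ∀ x, ‖gradient (fun y => g y * f y) x‖ ^ 2 + μ * (g x * f x) ^ 2
      ≤ (1 + α⁻¹) * (‖gradient f x‖ ^ 2 + μ * f x ^ 2) := by
    intro x
    have h1 : gradient (fun y => g y * f y) x = g x • gradient f x + f x • gradient g x :=
      gradient_mul' (hg.differentiable one_ne_zero x) (hf.differentiable one_ne_zero x)
    have h2 : ‖gradient (fun y => g y * f y) x‖ ≤ ‖gradient f x‖ + c * |f x| := by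
      rw [h1]
      calc ‖g x • gradient f x + f x • gradient g x‖
          ≤ ‖g x • gradient f x‖ + ‖f x • gradient g x‖ := norm_add_le _ _
        _ ≤ ‖gradient f x‖ + c * |f x| := by
            rw [norm_smul, norm_smul]
            apply add_le_add
            · calc ‖g x‖ * ‖gradient f x‖ ≤ 1 * ‖gradient f x‖ := by
                    gcongr; exact hgb x
                _ = ‖gradient f x‖ := one_mul _
            · calc ‖f x‖ * ‖gradient g x‖ ≤ |f x| * c := by
                    rw [Real.norm_eq_abs]; gcongr; exact hgd x
                _ = c * |f x| := mul_comm _ _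
    set u := ‖gradient f x‖ with hu
    set v := |f x| with hv
    have hu0 : 0 ≤ u := norm_nonneg _
    have hv0 : 0 ≤ v := abs_nonneg _
    have hn0 : 0 ≤ ‖gradient (fun y => g y * f y) x‖ := norm_nonneg _
    have h3 : ‖gradient (fun y => g y * f y) x‖ ^ 2 ≤ (u + c * v) ^ 2 := by
      apply pow_le_pow_left₀ hn0 h2 2
    have h4 : (u + c * v) ^ 2 ≤ (1 + α⁻¹) * u ^ 2 + (1 + α) * (c * v) ^ 2 := by
      have hsq := sq_nonneg (u - α * (c * v))
      have hαi : α⁻¹ * α = 1 := inv_mul_cancel₀ hα.ne'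
      have : 2 * (u * (c * v)) ≤ α⁻¹ * u ^ 2 + α * (c * v) ^ 2 := by
        nlinarith [sq_nonneg (u - α * (c * v)), mul_pos (inv_pos.mpr hα) hα]
      nlinarith
    have h5 : (g x * f x) ^ 2 ≤ f x ^ 2 := by
      have : |g x * f x| ≤ |f x| := by
        rw [abs_mul]
        calc |g x| * |f x| ≤ 1 * |f x| := by gcongr; exact hgb x
          _ = |f x| := one_mul _
      calc (g x * f x) ^ 2 = |g x * f x| ^ 2 := (sq_abs _).symm
        _ ≤ |f x| ^ 2 := by gcongr
        _ = f x ^ 2 := sq_abs _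
    have h6 : (1 + α) * c ^ 2 * v ^ 2 ≤ (μ / α) * v ^ 2 := by
      gcongr
    have hvf : v ^ 2 = f x ^ 2 := sq_abs _
    have hμα : μ / α = μ * α⁻¹ := div_eq_mul_inv μ α
    calc ‖gradient (fun y => g y * f y) x‖ ^ 2 + μ * (g x * f x) ^ 2
        ≤ (1 + α⁻¹) * u ^ 2 + (1 + α) * (c * v) ^ 2 + μ * f x ^ 2 := by
          have := le_trans h3 h4
          nlinarith [mul_le_mul_of_nonneg_left h5 hμ.le]
      _ ≤ (1 + α⁻¹) * u ^ 2 + (μ / α) * f x ^ 2 + μ * f x ^ 2 := by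
          have e1 : (1 + α) * (c * v) ^ 2 = (1 + α) * c ^ 2 * v ^ 2 := by ring
          rw [hvf] at h6
          rw [e1, hvf]
          linarith
      _ = (1 + α⁻¹) * (u ^ 2 + μ * f x ^ 2) := by
          rw [hμα]; ring
  -- integrability
  have int_of : ∀ (h : EuclideanSpace ℝ (Fin 2) → ℝ), Continuous h → HasCompactSupport h →
      Integrable h := fun h hc hcs => hc.integrable_of_hasCompactSupport hcs
  have iA : Integrable (fun x => ‖gradient (fun y => g y * f y) x‖ ^ 2) :=
    int_of _ (((continuous_gradient hgf).norm).pow 2)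
      ((compactSupport_gradient hgfc).comp_left
        (g := fun y : EuclideanSpace ℝ (Fin 2) => ‖y‖ ^ 2) (by simp))
  have iB : Integrable (fun x => (g x * f x) ^ 2) :=
    int_of _ ((hg.continuous.mul hf.continuous).pow 2)
      (hgfc.comp_left (g := fun t : ℝ => t ^ 2) (by simp))
  have iC : Integrable (fun x => ‖gradient f x‖ ^ 2) :=
    int_of _ (((continuous_gradient hf).norm).pow 2)
      ((compactSupport_gradient hfc).comp_left
        (g := fun y : EuclideanSpace ℝ (Fin 2) => ‖y‖ ^ 2) (by simp))
  have iD : Integrable (fun x => f x ^ 2) :=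
    int_of _ (hf.continuous.pow 2) (hfc.comp_left (g := fun t : ℝ => t ^ 2) (by simp))
  have eL : (∫ x, ‖gradient (fun y => g y * f y) x‖ ^ 2) + μ * ∫ x, (g x * f x) ^ 2
      = ∫ x, (‖gradient (fun y => g y * f y) x‖ ^ 2 + μ * (g x * f x) ^ 2) := by
    rw [integral_add iA (iB.const_mul μ), integral_const_mul]
  have eR : (1 + α⁻¹) * ((∫ x, ‖gradient f x‖ ^ 2) + μ * ∫ x, f x ^ 2)
      = ∫ x, (1 + α⁻¹) * (‖gradient f x‖ ^ 2 + μ * f x ^ 2) := by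
    rw [integral_const_mul, integral_add iC (iD.const_mul μ), integral_const_mul]
  rw [eL, eR]
  exact integral_mono (iA.add (iB.const_mul μ)) ((iC.add (iD.const_mul μ)).const_mul _) key
end

section
/- Let f : ℝ² → ℝ be a continuous function with compact support satisfying ∫_{ℝ²} f(y) dy = 0, and define g : ℝ² → ℝ by g(x) = −(1/(2π)) ∫_{ℝ²} log‖x − y‖ · f(y) dy. Then g(x) → 0 as ‖x‖ → ∞ (that is, g tends to 0 along the cocompact filter on ℝ²). -/
open Real MeasureTheory Filter

lemma aux_abs_log_sub_log_le {a b : ℝ} (ha : 0 < a) (hb : 0 < b) :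
    |Real.log a - Real.log b| ≤ |a - b| / min a b := by
  wlog h : b ≤ a generalizing a b
  · rw [abs_sub_comm, abs_sub_comm a b, min_comm]
    exact this hb ha (le_of_not_ge h)
  rw [min_eq_right h, abs_of_nonneg (sub_nonneg.2 h),
    abs_of_nonneg (sub_nonneg.2 (Real.log_le_log hb h)),
    ← Real.log_div (ne_of_gt ha) (ne_of_gt hb)]
  calc Real.log (a / b) ≤ a / b - 1 := Real.log_le_sub_one_of_pos (div_pos ha hb)
    _ = (a - b) / b := by field_simp

/-- The logarithmic potential of a neutral charge distribution vanishes at infinity: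
if `f` is continuous with compact support and `∫ f = 0`, then
`g(x) = -(1/(2π)) ∫ log‖x-y‖ f(y) dy` tends to `0` along the cocompact filter on `ℝ²`. -/
theorem log_potential_neutral_decay
    (f : EuclideanSpace ℝ (Fin 2) → ℝ) (hf : Continuous f)
    (hsupp : HasCompactSupport f) (hmean : ∫ y, f y = 0) :
    Tendsto (fun x : EuclideanSpace ℝ (Fin 2) =>
        -(1 / (2 * π)) * ∫ y, Real.log ‖x - y‖ * f y)
      (cocompact (EuclideanSpace ℝ (Fin 2))) (nhds 0) := by
  obtain ⟨r, hr⟩ := hsupp.isCompact.isBounded.subset_closedBall 0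
  set R : ℝ := max r 1 with hRdef
  have hR1 : (1 : ℝ) ≤ R := le_max_right _ _
  have hRpos : (0 : ℝ) < R := lt_of_lt_of_le one_pos hR1
  have hsub : tsupport f ⊆ Metric.closedBall 0 R :=
    hr.trans (Metric.closedBall_subset_closedBall (le_max_left _ _))
  have hfint : Integrable f := hf.integrable_of_hasCompactSupport hsupp
  set I : ℝ := ∫ y, |f y| with hIdef
  have hInonneg : 0 ≤ I := integral_nonneg fun y => abs_nonneg _
  set C : ℝ := (1 / (2 * π)) * (2 * R * I) with hCdef
  have hbound : ∀ x : EuclideanSpace ℝ (Fin 2), 2 * R ≤ ‖x‖ →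
      ‖-(1 / (2 * π)) * ∫ y, Real.log ‖x - y‖ * f y‖ ≤ C / ‖x‖ := by
    intro x hx
    have hxpos : (0 : ℝ) < ‖x‖ := lt_of_lt_of_le (by linarith) hx
    -- f vanishes near x
    have hfar : ∀ z : EuclideanSpace ℝ (Fin 2), z ∈ tsupport f → R ≤ ‖x - z‖ := by
      intro z hz
      have hz' : ‖z‖ ≤ R := by
        simpa [Metric.mem_closedBall, dist_zero_right] using hsub hz
      have := norm_sub_norm_le x z
      -- ‖x‖ - ‖z‖ ≤ ‖x - z‖
      linarith [norm_sub_norm_le x z]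
    -- continuity of integrand
    have hcont : Continuous fun y : EuclideanSpace ℝ (Fin 2) => Real.log ‖x - y‖ * f y := by
      rw [continuous_iff_continuousAt]
      intro y
      by_cases hy : y = x
      · subst hy
        have hev : (fun z : EuclideanSpace ℝ (Fin 2) => Real.log ‖y - z‖ * f z)
            =ᶠ[nhds y] (fun _ => (0:ℝ)) := by
          have : Metric.ball y 1 ∈ nhds y := Metric.ball_mem_nhds y one_pos
          filter_upwards [this] with z hz
          have hfz : f z = 0 := by
            by_contra hne
            have hzsupp : z ∈ tsupport f := subset_tsupport f hne
            have := hfar z hzsupp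
            rw [Metric.mem_ball] at hz
            have hlt : ‖y - z‖ < 1 := by
              rw [norm_sub_rev]; simpa [dist_eq_norm] using hz
            linarith [hfar z hzsupp]
          simp [hfz]
        exact (continuousAt_const (y := (0:ℝ))).congr hev.symm
      · have hne : x - y ≠ 0 := sub_ne_zero.2 (Ne.symm hy)
        have h1 : ContinuousAt (fun y : EuclideanSpace ℝ (Fin 2) => Real.log ‖x - y‖) y := by
          apply (Real.continuousAt_log (by simpa using hne)).comp
          exact ((continuous_const.sub continuous_id).norm).continuousAt
        exact h1.mul hf.continuousAt
    have hcs : HasCompactSupport fun y : EuclideanSpace ℝ (Fin 2) => Real.log ‖x - y‖ * f y :=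
      hsupp.mul_left
    have hint1 : Integrable fun y : EuclideanSpace ℝ (Fin 2) => Real.log ‖x - y‖ * f y :=
      hcont.integrable_of_hasCompactSupport hcs
    have hint2 : Integrable fun y : EuclideanSpace ℝ (Fin 2) => Real.log ‖x‖ * f y :=
      hfint.const_mul _
    -- rewrite the integral using neutrality
    have hkey : (∫ y, Real.log ‖x - y‖ * f y)
        = ∫ y, (Real.log ‖x - y‖ - Real.log ‖x‖) * f y := by
      rw [show (fun y : EuclideanSpace ℝ (Fin 2) => (Real.log ‖x - y‖ - Real.log ‖x‖) * f y)
          = fun y : EuclideanSpace ℝ (Fin 2) => Real.log ‖x - y‖ * f y - Real.log ‖x‖ * f y by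
        funext y; ring]
      rw [integral_sub hint1 hint2, integral_const_mul, hmean, mul_zero, sub_zero]
    -- pointwise bound
    have hpt : ∀ y : EuclideanSpace ℝ (Fin 2), ‖(Real.log ‖x - y‖ - Real.log ‖x‖) * f y‖
        ≤ (2 * R / ‖x‖) * |f y| := by
      intro y
      by_cases hfy : f y = 0
      · simp [hfy]
      · have hy : y ∈ tsupport f := subset_tsupport f hfy
        have hy' : ‖y‖ ≤ R := by
          simpa [Metric.mem_closedBall, dist_zero_right] using hsub hy
        have ha : (0 : ℝ) < ‖x - y‖ := lt_of_lt_of_le hRpos (hfar y hy)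
        have hmin : ‖x‖ / 2 ≤ min ‖x - y‖ ‖x‖ := by
          apply le_min _ (by linarith)
          have := norm_sub_norm_le x y
          linarith
        have hdiff : |‖x - y‖ - ‖x‖| ≤ R := by
          have := abs_norm_sub_norm_le (x - y) x
          have h2 : ‖x - y - x‖ = ‖y‖ := by
            rw [show x - y - x = -y by abel, norm_neg]
          rw [h2] at this
          linarith
        have hlog : |Real.log ‖x - y‖ - Real.log ‖x‖| ≤ 2 * R / ‖x‖ := by
          calc |Real.log ‖x - y‖ - Real.log ‖x‖|
              ≤ |‖x - y‖ - ‖x‖| / min ‖x - y‖ ‖x‖ := aux_abs_log_sub_log_le ha hxpos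
            _ ≤ R / (‖x‖ / 2) := by
                apply div_le_div₀ hRpos.le hdiff (by linarith) hmin
            _ = 2 * R / ‖x‖ := by field_simp
        rw [norm_mul, Real.norm_eq_abs, Real.norm_eq_abs]
        exact mul_le_mul_of_nonneg_right hlog (abs_nonneg _)
    have hintR : Integrable fun y : EuclideanSpace ℝ (Fin 2) => (2 * R / ‖x‖) * |f y| :=
      (hfint.abs).const_mul _
    have hintL : Integrable fun y : EuclideanSpace ℝ (Fin 2) => (Real.log ‖x - y‖ - Real.log ‖x‖) * f y :=
      by simp only [sub_mul]; exact hint1.sub hint2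
    have hbnd : ‖∫ y, (Real.log ‖x - y‖ - Real.log ‖x‖) * f y‖
        ≤ (2 * R / ‖x‖) * I := by
      calc ‖∫ y, (Real.log ‖x - y‖ - Real.log ‖x‖) * f y‖
          ≤ ∫ y, ‖(Real.log ‖x - y‖ - Real.log ‖x‖) * f y‖ :=
            norm_integral_le_integral_norm _
        _ ≤ ∫ y, (2 * R / ‖x‖) * |f y| :=
            integral_mono hintL.norm hintR hpt
        _ = (2 * R / ‖x‖) * I := by rw [integral_const_mul]
    rw [hkey, norm_mul]
    have hπ : (0 : ℝ) < 1 / (2 * π) := by positivity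
    have : ‖-(1 / (2 * π))‖ = 1 / (2 * π) := by
      rw [norm_neg, Real.norm_eq_abs, abs_of_pos hπ]
    rw [this]
    calc (1 / (2 * π)) * ‖∫ y, (Real.log ‖x - y‖ - Real.log ‖x‖) * f y‖
        ≤ (1 / (2 * π)) * ((2 * R / ‖x‖) * I) :=
          mul_le_mul_of_nonneg_left hbnd hπ.le
      _ = C / ‖x‖ := by rw [hCdef]; field_simp
  -- conclude
  have htend : Tendsto (fun x : EuclideanSpace ℝ (Fin 2) => C / ‖x‖) (cocompact (EuclideanSpace ℝ (Fin 2))) (nhds 0) :=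
    Tendsto.div_atTop tendsto_const_nhds tendsto_norm_cocompact_atTop
  apply squeeze_zero_norm' _ htend
  filter_upwards [tendsto_norm_cocompact_atTop.eventually_ge_atTop (2 * R)] with x hx
  exact hbound x hx
end

section
/- Let H be a complex Hilbert space and let A : H → H be a bounded self-adjoint operator which is positive in the sense that re⟨x, Ax⟩ ≥ 0 for all x ∈ H. Let g ∈ H and set f = A g. Then lim_{μ → 0⁺} ⟨f, (A + μ·I)^{−1} f⟩ = ⟨g, A g⟩. -/
open Filter Topology ContinuousLinearMap

section aux
variable {H : Type*} [NormedAddCommGroup H] [InnerProductSpace ℂ H] [CompleteSpace H]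

lemma coercive_aux (A : H →L[ℂ] H) (hpos : ∀ x : H, 0 ≤ (inner ℂ x (A x) : ℂ).re)
    {μ : ℝ} (hμ : 0 < μ) (x : H) :
    ‖x‖ ^ 2 * μ ≤ ‖(inner ℂ ((A + (μ : ℂ) • (1 : H →L[ℂ] H)) x) x : ℂ)‖ := by
  have h1 : (inner ℂ ((A + (μ : ℂ) • (1 : H →L[ℂ] H)) x) x : ℂ)
      = inner ℂ (A x) x + (μ : ℂ) * inner ℂ x x := by
    rw [ContinuousLinearMap.add_apply, ContinuousLinearMap.smul_apply,
      ContinuousLinearMap.one_apply, inner_add_left, inner_smul_left, Complex.conj_ofReal]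
  have h2 : (inner ℂ (A x) x : ℂ).re = (inner ℂ x (A x) : ℂ).re := by
    rw [← inner_conj_symm x (A x), Complex.conj_re]
  have h3 : (inner ℂ ((A + (μ : ℂ) • (1 : H →L[ℂ] H)) x) x : ℂ).re
      = (inner ℂ x (A x) : ℂ).re + μ * ‖x‖ ^ 2 := by
    have h4 : ((inner ℂ x x : ℂ)).re = ‖x‖ ^ 2 := @inner_self_eq_norm_sq ℂ _ _ _ _ x
    rw [h1, Complex.add_re, Complex.re_ofReal_mul, h2, h4]
  calc ‖x‖ ^ 2 * μ ≤ (inner ℂ ((A + (μ : ℂ) • (1 : H →L[ℂ] H)) x) x : ℂ).re := by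
        rw [h3]; nlinarith [hpos x]
    _ ≤ ‖(inner ℂ ((A + (μ : ℂ) • (1 : H →L[ℂ] H)) x) x : ℂ)‖ :=
        (le_abs_self _).trans (Complex.abs_re_le_norm _)

lemma isUnit_aux (A : H →L[ℂ] H) (hpos : ∀ x : H, 0 ≤ (inner ℂ x (A x) : ℂ).re)
    {μ : ℝ} (hμ : 0 < μ) : IsUnit (A + (μ : ℂ) • (1 : H →L[ℂ] H)) := by
  refine isUnit_of_forall_le_norm_inner_map _ (c := μ.toNNReal) (by simpa) ?_
  intro x
  have h := coercive_aux A hpos hμ x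
  rw [Real.coe_toNNReal _ hμ.le]
  linarith

lemma inv_bound_aux (A : H →L[ℂ] H) (hpos : ∀ x : H, 0 ≤ (inner ℂ x (A x) : ℂ).re)
    {μ : ℝ} (hμ : 0 < μ) (x : H) :
    μ * ‖Ring.inverse (A + (μ : ℂ) • (1 : H →L[ℂ] H)) x‖ ≤ ‖x‖ := by
  set B := A + (μ : ℂ) • (1 : H →L[ℂ] H)
  set y := Ring.inverse B x
  have hBy : B y = x := by
    have := Ring.mul_inverse_cancel B (isUnit_aux A hpos hμ)
    calc B y = (B * Ring.inverse B) x := rfl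
      _ = x := by rw [this]; rfl
  have h := coercive_aux A hpos hμ y
  rw [hBy] at h
  have h2 : ‖(inner ℂ x y : ℂ)‖ ≤ ‖x‖ * ‖y‖ := norm_inner_le_norm _ _
  rcases eq_or_ne y 0 with hy | hy
  · simp [hy]
  · have hynorm : 0 < ‖y‖ := norm_pos_iff.mpr hy
    nlinarith [h.trans h2]

end aux

/-- Massless limit of the resolvent quadratic form on the range of `A`: if `A ≥ 0` is a
bounded self-adjoint operator and `f = A g`, then
`⟨f, (A + μI)^{-1} f⟩ → ⟨g, A g⟩` as `μ → 0⁺`. -/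
theorem resolvent_form_massless_limit
    (H : Type*) [NormedAddCommGroup H] [InnerProductSpace ℂ H] [CompleteSpace H]
    (A : H →L[ℂ] H) (hA : IsSelfAdjoint A)
    (hpos : ∀ x : H, 0 ≤ (inner ℂ x (A x) : ℂ).re)
    (g : H) (f : H) (hf : f = A g) :
    Tendsto (fun μ : ℝ =>
        (inner ℂ f (Ring.inverse (A + (μ : ℂ) • (1 : H →L[ℂ] H)) f) : ℂ))
      (𝓝[>] 0) (𝓝 (inner ℂ g (A g) : ℂ)) := by
  -- key identity for μ > 0
  have key : ∀ μ : ℝ, 0 < μ →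
      (inner ℂ f (Ring.inverse (A + (μ : ℂ) • (1 : H →L[ℂ] H)) f) : ℂ)
        = inner ℂ g (A g) - (μ : ℂ) * inner ℂ g g
          + (μ : ℂ) ^ 2 * inner ℂ g (Ring.inverse (A + (μ : ℂ) • (1 : H →L[ℂ] H)) g) := by
    intro μ hμ
    set B := A + (μ : ℂ) • (1 : H →L[ℂ] H) with hB
    set R := Ring.inverse B with hR
    have hu := isUnit_aux A hpos hμ
    have hRB : ∀ x : H, R (B x) = x := by
      intro x
      have := Ring.inverse_mul_cancel B hu
      calc R (B x) = (R * B) x := rfl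
        _ = x := by rw [this]; rfl
    have hBR : ∀ x : H, B (R x) = x := by
      intro x
      have := Ring.mul_inverse_cancel B hu
      calc B (R x) = (B * Ring.inverse B) x := rfl
        _ = x := by rw [this]; rfl
    -- R f = g - μ • R g
    have hRf : R f = g - (μ : ℂ) • R g := by
      have hBg : B (g - (μ : ℂ) • R g) = A g := by
        simp only [map_sub, map_smul, hBR g]
        simp only [hB, ContinuousLinearMap.add_apply, ContinuousLinearMap.smul_apply, ContinuousLinearMap.one_apply, map_sub, map_smul, smul_sub]
        abel
      have := hRB (g - (μ : ℂ) • R g)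
      rw [hBg] at this
      rw [hf, ← this]
    -- A (R g) = g - μ • R g
    have hARg : A (R g) = g - (μ : ℂ) • R g := by
      have := hBR g
      simp only [hB, ContinuousLinearMap.add_apply, ContinuousLinearMap.smul_apply, ContinuousLinearMap.one_apply] at this
      linear_combination (norm := module) this
    have hAdj : (inner ℂ (A g) g : ℂ) = inner ℂ g (A g) := by
      nth_rewrite 1 [← hA.adjoint_eq]
      exact ContinuousLinearMap.adjoint_inner_left A g g
    have hAdj2 : (inner ℂ (A g) (R g) : ℂ) = inner ℂ g (A (R g)) := by
      nth_rewrite 1 [← hA.adjoint_eq]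
      exact ContinuousLinearMap.adjoint_inner_left A (R g) g
    rw [hRf, hf, inner_sub_right, inner_smul_right, hAdj, hAdj2, hARg,
      inner_sub_right, inner_smul_right]
    ring
  -- assemble the limit
  have h0 : ∀ᶠ μ : ℝ in 𝓝[>] 0,
      (inner ℂ f (Ring.inverse (A + (μ : ℂ) • (1 : H →L[ℂ] H)) f) : ℂ)
        = inner ℂ g (A g) - (μ : ℂ) * inner ℂ g g
          + (μ : ℂ) ^ 2 * inner ℂ g (Ring.inverse (A + (μ : ℂ) • (1 : H →L[ℂ] H)) g) :=
    eventually_nhdsWithin_of_forall fun μ hμ => key μ hμ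
  have h1 : Tendsto (fun μ : ℝ => ((inner ℂ g (A g) : ℂ) - (μ : ℂ) * inner ℂ g g))
      (𝓝[>] 0) (𝓝 (inner ℂ g (A g) : ℂ)) := by
    have : Tendsto (fun μ : ℝ => ((inner ℂ g (A g) : ℂ) - (μ : ℂ) * inner ℂ g g))
        (𝓝 0) (𝓝 ((inner ℂ g (A g) : ℂ) - (0 : ℂ) * inner ℂ g g)) := by
      apply Tendsto.sub tendsto_const_nhds
      exact (Complex.continuous_ofReal.tendsto 0 |>.mul tendsto_const_nhds).congr (fun _ => rfl)
        |>.congr' (by simp) |>.mono_left le_rfl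
    simpa using this.mono_left nhdsWithin_le_nhds
  have h2 : Tendsto (fun μ : ℝ =>
      ((μ : ℂ) ^ 2 * inner ℂ g (Ring.inverse (A + (μ : ℂ) • (1 : H →L[ℂ] H)) g) : ℂ))
      (𝓝[>] 0) (𝓝 0) := by
    apply squeeze_zero_norm' (a := fun μ : ℝ => μ * ‖g‖ ^ 2)
    · filter_upwards [self_mem_nhdsWithin] with μ (hμ : 0 < μ)
      have hb := inv_bound_aux A hpos hμ g
      have hn : ‖(inner ℂ g (Ring.inverse (A + (μ : ℂ) • (1 : H →L[ℂ] H)) g) : ℂ)‖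
          ≤ ‖g‖ * ‖Ring.inverse (A + (μ : ℂ) • (1 : H →L[ℂ] H)) g‖ := norm_inner_le_norm _ _
      rw [norm_mul]
      have : ‖((μ : ℂ)) ^ 2‖ = μ ^ 2 := by
        simp [Complex.norm_real, abs_of_pos hμ]
      rw [this]
      nlinarith [mul_le_mul_of_nonneg_left hn (sq_nonneg μ),
        mul_le_mul_of_nonneg_left hb (mul_nonneg hμ.le (norm_nonneg g)),
        norm_nonneg (Ring.inverse (A + (μ : ℂ) • (1 : H →L[ℂ] H)) g), norm_nonneg g]
    · have : Tendsto (fun μ : ℝ => μ * ‖g‖ ^ 2) (𝓝 0) (𝓝 (0 * ‖g‖ ^ 2)) :=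
        tendsto_id.mul tendsto_const_nhds
      simpa using this.mono_left nhdsWithin_le_nhds
  have := h1.add h2
  rw [add_zero] at this
  exact this.congr' (Filter.EventuallyEq.symm h0)
end
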